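/- Let Λ be a row-finite locally convex k-graph such that Λ⁰ is finite with N := |Λ⁰|, and suppose no cycle in Λ has an entrance. Then for every λ ∈ Λ^{≤(N,…,N)}, the vertex s(λ) lies on an initial cycle of Λ, i.e. there is an initial cycle μ and n ∈ ℕ^k with n ≤ d(μ^∞) and μ^∞(n) = s(λ). -/

import Mathlib

open scoped ComplexOrder ENat

/-- A higher-rank graph (`k`-graph): a countable small category `Λ` together with a degree
functor `d : Λ → ℕᵏ` satisfying the unique factorisation property.  Morphisms ("paths") form
the type `Path`; vertices are identified with the paths of degree `0`.  Composition is encoded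
as a total function `comp` whose axioms only apply to composable pairs (`s μ = r ν`). -/
structure KGraph (k : ℕ) : Type 1 where
  Path : Type
  countable : Countable Path
  d : Path → Fin k → ℕ
  r : Path → Path
  s : Path → Path
  comp : Path → Path → Path
  d_r : ∀ lam, d (r lam) = 0
  d_s : ∀ lam, d (s lam) = 0
  r_vertex : ∀ v, d v = 0 → r v = v
  s_vertex : ∀ v, d v = 0 → s v = v
  r_comp : ∀ mu nu, s mu = r nu → r (comp mu nu) = r mu
  s_comp : ∀ mu nu, s mu = r nu → s (comp mu nu) = s nu
  d_comp : ∀ mu nu, s mu = r nu → d (comp mu nu) = d mu + d nu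
  comp_assoc : ∀ lam mu nu, s lam = r mu → s mu = r nu →
    comp (comp lam mu) nu = comp lam (comp mu nu)
  id_comp : ∀ lam, comp (r lam) lam = lam
  comp_id : ∀ lam, comp lam (s lam) = lam
  factor : ∀ (lam : Path) (m n : Fin k → ℕ), d lam = m + n →
    ∃! p : Path × Path, d p.1 = m ∧ d p.2 = n ∧ s p.1 = r p.2 ∧ comp p.1 p.2 = lam

namespace KGraph

variable {k : ℕ} (Λ : KGraph k)

/-- `v` is a vertex, i.e. a path of degree `0`. -/
def IsVertex (v : Λ.Path) : Prop := Λ.d v = 0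

/-- The set of minimal common extensions of `mu` and `nu`. -/
def MCE (mu nu : Λ.Path) : Set Λ.Path :=
  {lam | Λ.d lam = Λ.d mu ⊔ Λ.d nu ∧
    (∃ α, Λ.s mu = Λ.r α ∧ Λ.comp mu α = lam) ∧
    (∃ β, Λ.s nu = Λ.r β ∧ Λ.comp nu β = lam)}

/-- Pairs `(α, β)` with `μα = νβ ∈ MCE (μ, ν)`. -/
def MCEPairs (mu nu : Λ.Path) : Set (Λ.Path × Λ.Path) :=
  {p | Λ.s mu = Λ.r p.1 ∧ Λ.s nu = Λ.r p.2 ∧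
    Λ.comp mu p.1 = Λ.comp nu p.2 ∧ Λ.comp mu p.1 ∈ Λ.MCE mu nu}

/-- `Λ` is finitely aligned if all sets of minimal common extensions are finite. -/
def FinitelyAligned : Prop := ∀ mu nu : Λ.Path, (Λ.MCE mu nu).Finite

/-- `Λ` is row-finite if `vΛⁿ` is finite for every vertex `v` and `n ∈ ℕᵏ`. -/
def RowFinite : Prop :=
  ∀ (v : Λ.Path) (n : Fin k → ℕ), Λ.IsVertex v → {lam | Λ.r lam = v ∧ Λ.d lam = n}.Finite

/-- `Λ` is locally convex. -/
def LocallyConvex : Prop :=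
  ∀ i j : Fin k, i ≠ j → ∀ mu : Λ.Path, Λ.d mu = Pi.single i 1 →
    (∃ e, Λ.r e = Λ.r mu ∧ Λ.d e = Pi.single j 1) →
    ∃ e, Λ.r e = Λ.s mu ∧ Λ.d e = Pi.single j 1

/-- A subset `F ⊆ vΛ` is exhaustive if every `λ ∈ vΛ` has a common extension with some
member of `F`. -/
def Exhaustive (v : Λ.Path) (F : Set Λ.Path) : Prop :=
  ∀ lam, Λ.r lam = v → ∃ mu ∈ F, (Λ.MCE lam mu).Nonempty

/-- A generalised cycle: a pair of distinct paths `μ ≠ ν` with the same range and source such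
that every extension of `μ` has a common extension with `ν`. -/
def IsGenCycle (mu nu : Λ.Path) : Prop :=
  mu ≠ nu ∧ Λ.s mu = Λ.s nu ∧ Λ.r mu = Λ.r nu ∧
    ∀ τ, Λ.r τ = Λ.s mu → (Λ.MCE (Λ.comp mu τ) nu).Nonempty

/-- An entrance to the generalised cycle `(μ, ν)`. -/
def IsEntrance (mu nu τ : Λ.Path) : Prop :=
  Λ.r τ = Λ.s nu ∧ Λ.MCE (Λ.comp nu τ) mu = ∅

/-- A (conventional) cycle: a path of nonzero degree whose range and source coincide. -/
def IsCycle (lam : Λ.Path) : Prop := Λ.d lam ≠ 0 ∧ Λ.r lam = Λ.s lam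

/-- `Λ` contains no (conventional) cycles. -/
def NoCycles : Prop := ∀ lam : Λ.Path, Λ.r lam = Λ.s lam → Λ.d lam = 0

/-- A vertex `v` with `vΛ = {v}`. -/
def IsSource (v : Λ.Path) : Prop :=
  Λ.IsVertex v ∧ ∀ lam, Λ.r lam = v → lam = v

/-- `Ext (μ; E)`. -/
def Ext (mu : Λ.Path) (E : Set Λ.Path) : Set Λ.Path :=
  {τ | Λ.r τ = Λ.s mu ∧ ∃ nu ∈ E, Λ.comp mu τ ∈ Λ.MCE mu nu}

/-- No cycle in `Λ` has an entrance. -/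
def NoCycleHasEntrance : Prop :=
  ∀ lam, Λ.IsCycle lam → ∀ τ, Λ.r τ = Λ.r lam → (Λ.MCE τ lam).Nonempty

/-- `x` encodes a path of degree `m ∈ (ℕ ∪ {∞})ᵏ` in `Λ`, i.e. a degree-preserving functor
`Ω_{k,m} → Λ`, recorded as a total function on pairs `(p, q)`; only the values with
`p ≤ q ≤ m` are constrained. -/
def IsPathFun (m : Fin k → ℕ∞) (x : (Fin k → ℕ) → (Fin k → ℕ) → Λ.Path) : Prop :=
  (∀ p q : Fin k → ℕ, p ≤ q → (∀ i, (q i : ℕ∞) ≤ m i) → Λ.d (x p q) = q - p) ∧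
  (∀ p q : Fin k → ℕ, p ≤ q → (∀ i, (q i : ℕ∞) ≤ m i) →
    Λ.r (x p q) = x p p ∧ Λ.s (x p q) = x q q) ∧
  (∀ p q u : Fin k → ℕ, p ≤ q → q ≤ u → (∀ i, (u i : ℕ∞) ≤ m i) →
    Λ.comp (x p q) (x q u) = x p u)

/-- `x` is a boundary path of degree `m`. -/
def IsBoundaryFun (m : Fin k → ℕ∞) (x : (Fin k → ℕ) → (Fin k → ℕ) → Λ.Path) : Prop :=
  Λ.IsPathFun m x ∧
  ∀ p : Fin k → ℕ, (∀ i, (p i : ℕ∞) ≤ m i) →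
    ∀ E : Set Λ.Path, E.Finite → (∀ lam ∈ E, Λ.r lam = x p p) → Λ.Exhaustive (x p p) E →
      ∃ mu ∈ E, (∀ i, ((p i + Λ.d mu i : ℕ) : ℕ∞) ≤ m i) ∧ x p (p + Λ.d mu) = mu

/-- A path function `x` of degree `m` belongs to `Λ^{≤∞}`. -/
def IsLeInftyPath (m : Fin k → ℕ∞) (x : (Fin k → ℕ) → (Fin k → ℕ) → Λ.Path) : Prop :=
  Λ.IsPathFun m x ∧
  ∀ n : Fin k → ℕ, (∀ i, (n i : ℕ∞) ≤ m i) → ∀ i, (n i : ℕ∞) = m i →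
    ∀ e, ¬(Λ.r e = x n n ∧ Λ.d e = Pi.single i 1)

/-- The degree of `τ^∞` for a cycle (or initial cycle) `τ`: `∞` in the coordinates where
`d τ` is nonzero, `0` elsewhere. -/
def degInf (τ : Λ.Path) : Fin k → ℕ∞ := fun i => if Λ.d τ i = 0 then 0 else ⊤

/-- An initial cycle: `r μ = s μ` and `r(μ)Λ^{eᵢ} = ∅` whenever `d(μ)ᵢ = 0`. -/
def IsInitialCycle (mu : Λ.Path) : Prop :=
  Λ.r mu = Λ.s mu ∧
  ∀ i, Λ.d mu i = 0 → ∀ e, ¬(Λ.r e = Λ.r mu ∧ Λ.d e = Pi.single i 1)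

/-- `x` is (the path function of) `μ^∞` for the initial cycle `μ`. -/
def IsInfIterate (mu : Λ.Path) (x : (Fin k → ℕ) → (Fin k → ℕ) → Λ.Path) : Prop :=
  Λ.IsPathFun (Λ.degInf mu) x ∧ x 0 0 = Λ.r mu ∧
    ∀ n : ℕ, x (n • Λ.d mu) ((n + 1) • Λ.d mu) = mu

/-- Membership in `Λ^{≤ n}`. -/
def LePath (n : Fin k → ℕ) (lam : Λ.Path) : Prop :=
  Λ.d lam ≤ n ∧
    ∀ i, Λ.d lam i < n i → ∀ e, ¬(Λ.r e = Λ.s lam ∧ Λ.d e = Pi.single i 1)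

/-- Minimal common extensions computed inside a subset `S` of `Λ` (all data lying in `S`). -/
def MCEWithin (S : Set Λ.Path) (mu nu : Λ.Path) : Set Λ.Path :=
  {lam | lam ∈ S ∧ Λ.d lam = Λ.d mu ⊔ Λ.d nu ∧
    (∃ α ∈ S, Λ.s mu = Λ.r α ∧ Λ.comp mu α = lam) ∧
    (∃ β ∈ S, Λ.s nu = Λ.r β ∧ Λ.comp nu β = lam)}

/-- Generalised cycles of the sub-`k`-graph determined by a subset `S` of `Λ`. -/
def IsGenCycleWithin (S : Set Λ.Path) (mu nu : Λ.Path) : Prop :=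
  mu ≠ nu ∧ Λ.s mu = Λ.s nu ∧ Λ.r mu = Λ.r nu ∧
    ∀ τ ∈ S, Λ.r τ = Λ.s mu → (Λ.MCEWithin S (Λ.comp mu τ) nu).Nonempty

end KGraph

/-- A Cuntz–Krieger `Λ`-family in a `*`-ring `B`: (CK1) the vertex elements are mutually
orthogonal projections, (CK2) multiplicativity, (CK3) the Cuntz–Krieger relation for
`t_μ* t_ν`, and (CK4) the exhaustivity relation (stated for an arbitrary ordering of the
finite exhaustive set). -/
structure CKFamily {k : ℕ} (Λ : KGraph k) (B : Type*) [NonUnitalRing B] [StarRing B] where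
  t : Λ.Path → B
  selfadjoint : ∀ v, Λ.IsVertex v → star (t v) = t v
  idem : ∀ v, Λ.IsVertex v → t v * t v = t v
  orth : ∀ v w, Λ.IsVertex v → Λ.IsVertex w → v ≠ w → t v * t w = 0
  mul_eq : ∀ mu nu, Λ.s mu = Λ.r nu → t mu * t nu = t (Λ.comp mu nu)
  ck3 : ∀ mu nu, star (t mu) * t nu = ∑ᶠ p ∈ Λ.MCEPairs mu nu, t p.1 * star (t p.2)
  ck4 : ∀ v, Λ.IsVertex v → ∀ (a : Λ.Path) (l : List Λ.Path), (a :: l).Nodup →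
    (∀ lam ∈ a :: l, Λ.r lam = v) → Λ.Exhaustive v {lam | lam ∈ a :: l} →
    (l.map fun lam => t v - t lam * star (t lam)).foldl (· * ·)
      (t v - t a * star (t a)) = 0

/-- A C*-algebra is AF (approximately finite-dimensional) if it contains an increasing
sequence of finite-dimensional `*`-subalgebras whose union is dense. -/
def IsAF (A : Type*) [NonUnitalNormedRing A] [StarRing A] [NormedSpace ℂ A] : Prop :=
  ∃ S : ℕ → NonUnitalStarSubalgebra ℂ A, Monotone S ∧
    (∀ n, FiniteDimensional ℂ (S n)) ∧ Dense (⋃ n, (S n : Set A))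

/-- A closed `*`-subalgebra of `A`, presented as a subset `S`, is AF if it contains an
increasing sequence of finite-dimensional `*`-subalgebras of `A` whose union is dense in `S`. -/
def IsAFIn (A : Type*) [NonUnitalNormedRing A] [StarRing A] [NormedSpace ℂ A]
    (S : Set A) : Prop :=
  ∃ T : ℕ → NonUnitalStarSubalgebra ℂ A, Monotone T ∧ (∀ n, (T n : Set A) ⊆ S) ∧
    (∀ n, FiniteDimensional ℂ (T n)) ∧ ∀ x ∈ S, x ∈ closure (⋃ n, (T n : Set A))


namespace KGraph

variable {k : ℕ} (Λ : KGraph k)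

lemma r_r' (lam : Λ.Path) : Λ.r (Λ.r lam) = Λ.r lam := Λ.r_vertex _ (Λ.d_r lam)
lemma s_r' (lam : Λ.Path) : Λ.s (Λ.r lam) = Λ.r lam := Λ.s_vertex _ (Λ.d_r lam)
lemma r_s' (lam : Λ.Path) : Λ.r (Λ.s lam) = Λ.s lam := Λ.r_vertex _ (Λ.d_s lam)
lemma s_s' (lam : Λ.Path) : Λ.s (Λ.s lam) = Λ.s lam := Λ.s_vertex _ (Λ.d_s lam)

open Classical in
/-- Factorisation of `lam` at degree `m ≤ d lam`. -/
noncomputable def split (lam : Λ.Path) (m : Fin k → ℕ) : Λ.Path × Λ.Path :=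
  if h : m ≤ Λ.d lam then
    (Λ.factor lam m (Λ.d lam - m) (by
      funext i
      have := Pi.le_def.mp h i
      simp only [Pi.add_apply, Pi.sub_apply]
      omega)).choose
  else (lam, lam)

lemma split_spec (lam : Λ.Path) {m : Fin k → ℕ} (h : m ≤ Λ.d lam) :
    Λ.d (Λ.split lam m).1 = m ∧ Λ.d (Λ.split lam m).2 = Λ.d lam - m ∧
      Λ.s (Λ.split lam m).1 = Λ.r (Λ.split lam m).2 ∧
      Λ.comp (Λ.split lam m).1 (Λ.split lam m).2 = lam := by
  have hd : Λ.d lam = m + (Λ.d lam - m) := by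
    funext i; have := Pi.le_def.mp h i; simp only [Pi.add_apply, Pi.sub_apply]; omega
  unfold split
  rw [dif_pos h]
  exact (Λ.factor lam m (Λ.d lam - m) hd).choose_spec.1

lemma split_unique (lam : Λ.Path) {m : Fin k → ℕ} (h : m ≤ Λ.d lam) {a b : Λ.Path}
    (ha : Λ.d a = m) (hs : Λ.s a = Λ.r b) (hc : Λ.comp a b = lam) :
    Λ.split lam m = (a, b) := by
  have hb : Λ.d b = Λ.d lam - m := by
    have hd := Λ.d_comp a b hs
    rw [hc, ha] at hd
    funext i
    have := congrFun hd i
    simp only [Pi.add_apply, Pi.sub_apply] at this ⊢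
    omega
  have hd : Λ.d lam = m + (Λ.d lam - m) := by
    funext i; have := Pi.le_def.mp h i; simp only [Pi.add_apply, Pi.sub_apply]; omega
  obtain ⟨h1, h2, h3, h4⟩ := Λ.split_spec lam h
  obtain ⟨w, hw, huniq⟩ := Λ.factor lam m (Λ.d lam - m) hd
  have e1 := huniq (a, b) ⟨ha, hb, hs, hc⟩
  have e2 := huniq (Λ.split lam m) ⟨h1, h2, h3, h4⟩
  rw [e2, ← e1]

lemma comp_split (a b : Λ.Path) (hs : Λ.s a = Λ.r b) :
    Λ.split (Λ.comp a b) (Λ.d a) = (a, b) := by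
  have h : Λ.d a ≤ Λ.d (Λ.comp a b) := by
    rw [Λ.d_comp a b hs]; exact le_self_add
  exact Λ.split_unique _ h rfl hs rfl

lemma split_zero (lam : Λ.Path) : Λ.split lam 0 = (Λ.r lam, lam) :=
  Λ.split_unique lam zero_le (Λ.d_r lam) (Λ.s_r' lam) (Λ.id_comp lam)

lemma split_top (lam : Λ.Path) : Λ.split lam (Λ.d lam) = (lam, Λ.s lam) :=
  Λ.split_unique lam le_rfl rfl (Λ.r_s' lam).symm (Λ.comp_id lam)

/-- The segment of `lam` between degrees `p ≤ q`. -/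
noncomputable def seg (lam : Λ.Path) (p q : Fin k → ℕ) : Λ.Path :=
  (Λ.split (Λ.split lam q).1 p).2

lemma d_split_fst (lam : Λ.Path) {q : Fin k → ℕ} (hq : q ≤ Λ.d lam) :
    Λ.d (Λ.split lam q).1 = q := (Λ.split_spec lam hq).1

lemma seg_nest (lam : Λ.Path) {p q : Fin k → ℕ} (hpq : p ≤ q) (hq : q ≤ Λ.d lam) :
    (Λ.split lam p).1 = (Λ.split (Λ.split lam q).1 p).1 ∧
      (Λ.split lam p).2 = Λ.comp (Λ.seg lam p q) (Λ.split lam q).2 ∧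
      Λ.s (Λ.seg lam p q) = Λ.r (Λ.split lam q).2 := by
  obtain ⟨hA1, hA2, hA3, hA4⟩ := Λ.split_spec lam hq
  have hp1 : p ≤ Λ.d (Λ.split lam q).1 := by rw [hA1]; exact hpq
  obtain ⟨hB1, hB2, hB3, hB4⟩ := Λ.split_spec (Λ.split lam q).1 hp1
  have hseg : Λ.seg lam p q = (Λ.split (Λ.split lam q).1 p).2 := rfl
  have hs2 : Λ.s (Λ.seg lam p q) = Λ.r (Λ.split lam q).2 := by
    have h5 := Λ.s_comp _ _ hB3
    rw [hB4] at h5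
    rw [hseg, ← h5, hA3]
  have hcomp : Λ.comp (Λ.split (Λ.split lam q).1 p).1
      (Λ.comp (Λ.seg lam p q) (Λ.split lam q).2) = lam := by
    rw [hseg, ← Λ.comp_assoc _ _ _ hB3 hs2, hB4, hA4]
  have hr : Λ.s (Λ.split (Λ.split lam q).1 p).1
      = Λ.r (Λ.comp (Λ.seg lam p q) (Λ.split lam q).2) := by
    rw [Λ.r_comp _ _ hs2, hseg]; exact hB3
  have hfin := Λ.split_unique lam (le_trans hpq hq) hB1 hr hcomp
  exact ⟨by rw [hfin], by rw [hfin], hs2⟩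

lemma seg_zero_left (lam : Λ.Path) {q : Fin k → ℕ} (hq : q ≤ Λ.d lam) :
    Λ.seg lam 0 q = (Λ.split lam q).1 := by
  show (Λ.split (Λ.split lam q).1 0).2 = _
  rw [Λ.split_zero]

lemma seg_top (lam : Λ.Path) {q : Fin k → ℕ} (hq : q ≤ Λ.d lam) :
    Λ.seg lam q (Λ.d lam) = (Λ.split lam q).2 := by
  show (Λ.split (Λ.split lam (Λ.d lam)).1 q).2 = _
  rw [Λ.split_top]

lemma seg_zero_top (lam : Λ.Path) : Λ.seg lam 0 (Λ.d lam) = lam := by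
  rw [Λ.seg_top lam zero_le, Λ.split_zero]

lemma d_seg (lam : Λ.Path) {p q : Fin k → ℕ} (hpq : p ≤ q) (hq : q ≤ Λ.d lam) :
    Λ.d (Λ.seg lam p q) = q - p := by
  have hp1 : p ≤ Λ.d (Λ.split lam q).1 := by rw [Λ.d_split_fst lam hq]; exact hpq
  have h2 := (Λ.split_spec (Λ.split lam q).1 hp1).2.1
  show Λ.d (Λ.split (Λ.split lam q).1 p).2 = q - p
  rw [h2, Λ.d_split_fst lam hq]

lemma seg_vertex (lam : Λ.Path) {p : Fin k → ℕ} (hp : p ≤ Λ.d lam) :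
    Λ.seg lam p p = Λ.s (Λ.split lam p).1 := by
  have h := Λ.split_top (Λ.split lam p).1
  rw [Λ.d_split_fst lam hp] at h
  show (Λ.split (Λ.split lam p).1 p).2 = _
  rw [h]

lemma seg_zero_zero (lam : Λ.Path) : Λ.seg lam 0 0 = Λ.r lam := by
  rw [Λ.seg_vertex lam zero_le, Λ.split_zero, Λ.s_r']

lemma seg_top_top (lam : Λ.Path) : Λ.seg lam (Λ.d lam) (Λ.d lam) = Λ.s lam := by
  rw [Λ.seg_vertex lam le_rfl, Λ.split_top]

lemma r_seg (lam : Λ.Path) {p q : Fin k → ℕ} (hpq : p ≤ q) (hq : q ≤ Λ.d lam) :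
    Λ.r (Λ.seg lam p q) = Λ.seg lam p p := by
  obtain ⟨h1, h2, h3⟩ := Λ.seg_nest lam hpq hq
  have hp1 : p ≤ Λ.d (Λ.split lam q).1 := by rw [Λ.d_split_fst lam hq]; exact hpq
  have hB3 := (Λ.split_spec (Λ.split lam q).1 hp1).2.2.1
  rw [Λ.seg_vertex lam (le_trans hpq hq), h1]
  exact hB3.symm

lemma s_seg (lam : Λ.Path) {p q : Fin k → ℕ} (hpq : p ≤ q) (hq : q ≤ Λ.d lam) :
    Λ.s (Λ.seg lam p q) = Λ.seg lam q q := by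
  obtain ⟨h1, h2, h3⟩ := Λ.seg_nest lam hpq hq
  rw [h3, Λ.seg_vertex lam hq]
  exact ((Λ.split_spec lam hq).2.2.1).symm

lemma seg_of_split (lam : Λ.Path) {p q u : Fin k → ℕ} (hpq : p ≤ q) (hqu : q ≤ u)
    (hu : u ≤ Λ.d lam) :
    Λ.seg lam p q = Λ.seg (Λ.split lam u).1 p q := by
  have h1 := (Λ.seg_nest lam hqu hu).1
  show (Λ.split (Λ.split lam q).1 p).2 = (Λ.split (Λ.split (Λ.split lam u).1 q).1 p).2
  rw [h1]

lemma comp_seg_top (lam : Λ.Path) {p q : Fin k → ℕ} (hpq : p ≤ q) (hq : q ≤ Λ.d lam) :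
    Λ.comp (Λ.seg lam p q) (Λ.seg lam q (Λ.d lam)) = Λ.seg lam p (Λ.d lam) := by
  rw [Λ.seg_top lam hq, Λ.seg_top lam (le_trans hpq hq)]
  exact ((Λ.seg_nest lam hpq hq).2.1).symm

lemma comp_seg (lam : Λ.Path) {p q u : Fin k → ℕ} (hpq : p ≤ q) (hqu : q ≤ u)
    (hu : u ≤ Λ.d lam) :
    Λ.comp (Λ.seg lam p q) (Λ.seg lam q u) = Λ.seg lam p u := by
  rw [Λ.seg_of_split lam hpq hqu hu, Λ.seg_of_split lam hqu le_rfl hu,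
    Λ.seg_of_split lam (le_trans hpq hqu) le_rfl hu]
  set L := (Λ.split lam u).1 with hL
  have hd : Λ.d L = u := Λ.d_split_fst lam hu
  rw [← hd]
  exact Λ.comp_seg_top L hpq (by rw [hd]; exact hqu)

/-- Iterated composition of a cycle with itself. -/
noncomputable def cpow (mu : Λ.Path) : ℕ → Λ.Path
  | 0 => Λ.r mu
  | n + 1 => Λ.comp (cpow mu n) mu

lemma cpow_spec (mu : Λ.Path) (h : Λ.r mu = Λ.s mu) (n : ℕ) :
    Λ.s (Λ.cpow mu n) = Λ.r mu ∧ Λ.r (Λ.cpow mu n) = Λ.r mu ∧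
      Λ.d (Λ.cpow mu n) = n • Λ.d mu := by
  induction n with
  | zero => exact ⟨Λ.s_r' mu, Λ.r_r' mu, by rw [cpow, Λ.d_r]; simp⟩
  | succ n ih =>
    have hcomp : Λ.s (Λ.cpow mu n) = Λ.r mu := ih.1
    refine ⟨?_, ?_, ?_⟩
    · rw [cpow, Λ.s_comp _ _ hcomp, ← h]
    · rw [cpow, Λ.r_comp _ _ hcomp]; exact ih.2.1
    · rw [cpow, Λ.d_comp _ _ hcomp, ih.2.2, succ_nsmul]

lemma cpow_add (mu : Λ.Path) (h : Λ.r mu = Λ.s mu) (T t : ℕ) :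
    ∃ β, Λ.s (Λ.cpow mu T) = Λ.r β ∧ Λ.comp (Λ.cpow mu T) β = Λ.cpow mu (T + t) := by
  induction t with
  | zero => exact ⟨Λ.s (Λ.cpow mu T), (Λ.r_s' _).symm, Λ.comp_id _⟩
  | succ t ih =>
    obtain ⟨β, hβ1, hβ2⟩ := ih
    have hsβ : Λ.s β = Λ.r mu := by
      have h5 := Λ.s_comp _ _ hβ1
      rw [hβ2] at h5
      rw [← h5]; exact (Λ.cpow_spec mu h (T + t)).1
    refine ⟨Λ.comp β mu, ?_, ?_⟩
    · rw [Λ.r_comp _ _ hsβ]; exact hβ1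
    · rw [← Λ.comp_assoc _ _ _ hβ1 hsβ, hβ2, ← add_assoc, cpow]

lemma seg_cpow (mu : Λ.Path) (h : Λ.r mu = Λ.s mu) {p q : Fin k → ℕ} {T T' : ℕ}
    (hpq : p ≤ q) (hT : q ≤ T • Λ.d mu) (hTT' : T ≤ T') :
    Λ.seg (Λ.cpow mu T') p q = Λ.seg (Λ.cpow mu T) p q := by
  obtain ⟨t, rfl⟩ := Nat.exists_eq_add_of_le hTT'
  obtain ⟨β, hβ1, hβ2⟩ := Λ.cpow_add mu h T t
  have hdT := (Λ.cpow_spec mu h T).2.2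
  have hsplit : Λ.split (Λ.cpow mu (T + t)) (T • Λ.d mu) = (Λ.cpow mu T, β) := by
    rw [← hβ2, ← hdT]
    exact Λ.comp_split _ _ hβ1
  have hu : T • Λ.d mu ≤ Λ.d (Λ.cpow mu (T + t)) := by
    rw [(Λ.cpow_spec mu h (T + t)).2.2]
    refine Pi.le_def.mpr fun i => ?_
    simp only [Pi.smul_apply, smul_eq_mul]
    exact Nat.mul_le_mul_right _ (Nat.le_add_right T t)
  have h6 := Λ.seg_of_split (Λ.cpow mu (T + t)) hpq hT hu
  rw [h6, hsplit]

open Classical in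
/-- The infinite iterate `μ^∞` of an initial cycle, as a path function. -/
noncomputable def infIter (mu : Λ.Path) (p q : Fin k → ℕ) : Λ.Path :=
  if p ≤ q ∧ ∀ i, Λ.d mu i = 0 → q i = 0 then Λ.seg (Λ.cpow mu (∑ i, q i)) p q
  else Λ.r mu

lemma le_sum_smul (mu : Λ.Path) {q : Fin k → ℕ} (hgood : ∀ i, Λ.d mu i = 0 → q i = 0) :
    q ≤ (∑ i, q i) • Λ.d mu := by
  refine Pi.le_def.mpr fun i => ?_
  simp only [Pi.smul_apply, smul_eq_mul]
  by_cases hi : Λ.d mu i = 0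
  · rw [hgood i hi]; exact Nat.zero_le _
  · have h1 : 1 ≤ Λ.d mu i := Nat.one_le_iff_ne_zero.mpr hi
    have h2 : q i ≤ ∑ j, q j := Finset.single_le_sum (fun j _ => Nat.zero_le _) (Finset.mem_univ i)
    calc q i ≤ (∑ j, q j) * 1 := by omega
    _ ≤ (∑ j, q j) * Λ.d mu i := Nat.mul_le_mul_left _ h1

lemma infIter_eq (mu : Λ.Path) (h : Λ.r mu = Λ.s mu) {p q : Fin k → ℕ} {T : ℕ}
    (hpq : p ≤ q) (hgood : ∀ i, Λ.d mu i = 0 → q i = 0) (hT : q ≤ T • Λ.d mu) :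
    Λ.infIter mu p q = Λ.seg (Λ.cpow mu T) p q := by
  rw [infIter, if_pos ⟨hpq, hgood⟩]
  have hS := Λ.le_sum_smul mu hgood
  calc Λ.seg (Λ.cpow mu (∑ i, q i)) p q
      = Λ.seg (Λ.cpow mu (max (∑ i, q i) T)) p q :=
        (Λ.seg_cpow mu h hpq hS (le_max_left _ _)).symm
    _ = Λ.seg (Λ.cpow mu T) p q := Λ.seg_cpow mu h hpq hT (le_max_right _ _)

lemma smul_single_apply (j : ℕ) (i x : Fin k) :
    (j • Pi.single i 1 : Fin k → ℕ) x = if x = i then j else 0 := by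
  simp only [Pi.smul_apply, smul_eq_mul, Pi.single_apply]
  split_ifs <;> omega

lemma descent (c : Λ.Path) (i : Fin k) (m : ℕ) (hm : 0 < m)
    (hdc : Λ.d c = m • Pi.single i 1) (hcyc : Λ.r c = Λ.s c)
    (hne : ∀ τ, Λ.r τ = Λ.r c → (Λ.MCE τ c).Nonempty) (a : ℕ) :
    ∀ t : Λ.Path, Λ.r t = Λ.r c → Λ.d t = a • Pi.single i 1 →
      ∃ a', a' ≤ m ∧ Λ.s t = Λ.seg c (a' • Pi.single i 1) (a' • Pi.single i 1) := by
  induction a using Nat.strong_induction_on with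
  | _ a IH =>
  intro t hrt hdt
  obtain ⟨ρ, hρd, ⟨α, hα1, hα2⟩, ⟨β, hβ1, hβ2⟩⟩ := hne t hrt
  by_cases ham : a ≤ m
  · have hsup : Λ.d t ⊔ Λ.d c = Λ.d c := by
      rw [hdt, hdc]
      funext j
      simp only [Pi.sup_apply, Pi.smul_apply, smul_eq_mul, Pi.single_apply]
      rcases eq_or_ne j i with rfl | hj
      · simpa using sup_eq_right.mpr ham
      · simp [hj]
    have hdρ : Λ.d ρ = Λ.d c := by rw [hρd, hsup]
    have hdβ : Λ.d β = 0 := by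
      have h5 := Λ.d_comp c β hβ1
      rw [hβ2, hdρ] at h5
      funext j
      have := congrFun h5 j
      simp only [Pi.add_apply, Pi.zero_apply] at this ⊢
      omega
    have hβv : β = Λ.s c := by
      have h6 : Λ.r β = β := Λ.r_vertex β hdβ
      rw [← h6]; exact hβ1.symm
    have hρc : ρ = c := by rw [← hβ2, hβv, Λ.comp_id]
    have hc : Λ.comp t α = c := by rw [hα2, hρc]
    have hsplitc : Λ.split c (Λ.d t) = (t, α) := by
      rw [← hc]; exact Λ.comp_split t α hα1
    have hle : Λ.d t ≤ Λ.d c := by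
      rw [hdt, hdc]
      refine Pi.le_def.mpr fun j => ?_
      simp only [Pi.smul_apply, smul_eq_mul]
      exact Nat.mul_le_mul_right _ ham
    refine ⟨a, ham, ?_⟩
    rw [Λ.seg_vertex c (hdt ▸ hle), ← hdt, hsplitc]
  · push_neg at ham
    have hsup : Λ.d t ⊔ Λ.d c = Λ.d t := by
      rw [hdt, hdc]
      funext j
      simp only [Pi.sup_apply, Pi.smul_apply, smul_eq_mul, Pi.single_apply]
      rcases eq_or_ne j i with rfl | hj
      · simpa using sup_eq_left.mpr (le_of_lt ham)
      · simp [hj]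
    have hdρ : Λ.d ρ = Λ.d t := by rw [hρd, hsup]
    have hdα : Λ.d α = 0 := by
      have h5 := Λ.d_comp t α hα1
      rw [hα2, hdρ] at h5
      funext j
      have := congrFun h5 j
      simp only [Pi.add_apply, Pi.zero_apply] at this ⊢
      omega
    have hαv : α = Λ.s t := by
      have h6 : Λ.r α = α := Λ.r_vertex α hdα
      rw [← h6]; exact hα1.symm
    have hρt : ρ = t := by rw [← hα2, hαv, Λ.comp_id]
    have hct : Λ.comp c β = t := by rw [hβ2, hρt]
    have hdβ : Λ.d β = (a - m) • Pi.single i 1 := by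
      have h5 := Λ.d_comp c β hβ1
      rw [hct, hdt, hdc] at h5
      funext j
      have h7 := congrFun h5 j
      simp only [Pi.add_apply, Pi.smul_apply, smul_eq_mul, Pi.single_apply] at h7 ⊢
      rcases eq_or_ne j i with rfl | hj
      · simp at h7 ⊢; omega
      · simp [hj] at h7 ⊢; omega
    have hrβ : Λ.r β = Λ.r c := by rw [← hβ1, ← hcyc]
    have hsβ : Λ.s β = Λ.s t := by rw [← hct, Λ.s_comp _ _ hβ1]
    obtain ⟨a', ha', heq⟩ := IH (a - m) (by omega) β hrβ hdβ
    exact ⟨a', ha', by rw [← hsβ]; exact heq⟩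

lemma cycle_through (c : Λ.Path) (i : Fin k) (m : ℕ) (hm : 0 < m)
    (hdc : Λ.d c = m • Pi.single i 1) (hcyc : Λ.r c = Λ.s c)
    (hne : ∀ τ, Λ.r τ = Λ.r c → (Λ.MCE τ c).Nonempty)
    (t : Λ.Path) (a : ℕ) (hrt : Λ.r t = Λ.r c) (hdt : Λ.d t = a • Pi.single i 1) :
    ∃ w, Λ.r w = Λ.s t ∧ Λ.s w = Λ.s t ∧ Λ.d w = m • Pi.single i 1 := by
  obtain ⟨a', ha'm, hst⟩ := Λ.descent c i m hm hdc hcyc hne a t hrt hdt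
  have hpdc : a' • Pi.single i 1 ≤ Λ.d c := by
    rw [hdc]
    refine Pi.le_def.mpr fun x => ?_
    simp only [Pi.smul_apply, smul_eq_mul]
    exact Nat.mul_le_mul_right _ ha'm
  have hcompat : Λ.s (Λ.seg c (a' • Pi.single i 1) (Λ.d c)) = Λ.r (Λ.seg c 0 (a' • Pi.single i 1)) := by
    rw [Λ.s_seg c hpdc le_rfl, Λ.r_seg c zero_le hpdc, Λ.seg_top_top, Λ.seg_zero_zero]
    exact hcyc.symm
  refine ⟨Λ.comp (Λ.seg c (a' • Pi.single i 1) (Λ.d c)) (Λ.seg c 0 (a' • Pi.single i 1)),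
    ?_, ?_, ?_⟩
  · rw [Λ.r_comp _ _ hcompat, Λ.r_seg c hpdc le_rfl, ← hst]
  · rw [Λ.s_comp _ _ hcompat, Λ.s_seg c zero_le hpdc, ← hst]
  · rw [Λ.d_comp _ _ hcompat, Λ.d_seg c hpdc le_rfl, Λ.d_seg c zero_le hpdc]
    funext x
    have hpx := Pi.le_def.mp hpdc x
    have hdcx := congrFun hdc x
    simp only [Pi.add_apply, Pi.sub_apply, Pi.zero_apply] at *
    omega

end KGraph

/-- from the proof of Proposition 5.9. If `Λ` is row-finite, locally
convex, with `N = |Λ⁰|` vertices, and no cycle of `Λ` has an entrance, then the source of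
every `λ ∈ Λ^{≤(N,…,N)}` lies on an initial cycle. -/
theorem stmt16 {k : ℕ} (Λ : KGraph k) (hRF : Λ.RowFinite) (hLC : Λ.LocallyConvex)
    (hfin : {v : Λ.Path | Λ.IsVertex v}.Finite) (hnoent : Λ.NoCycleHasEntrance)
    (lam : Λ.Path)
    (hlam : Λ.LePath (fun _ => {v : Λ.Path | Λ.IsVertex v}.ncard) lam) :
    ∃ mu : Λ.Path, Λ.IsInitialCycle mu ∧
      ∃ x : (Fin k → ℕ) → (Fin k → ℕ) → Λ.Path, Λ.IsInfIterate mu x ∧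
        ∃ n : Fin k → ℕ, (∀ i, (n i : ℕ∞) ≤ Λ.degInf mu i) ∧ x n n = Λ.s lam := by
  classical
  set N := {v : Λ.Path | Λ.IsVertex v}.ncard with hN
  have hv0vert : Λ.IsVertex (Λ.s lam) := Λ.d_s lam
  have hrv0 : Λ.r (Λ.s lam) = Λ.s lam := Λ.r_s' lam
  have hsv0 : Λ.s (Λ.s lam) = Λ.s lam := Λ.s_s' lam
  have hdv0 : ∀ j, Λ.d (Λ.s lam) j = 0 := fun j => by
    rw [hv0vert]; rfl
  -- Step 1: for every direction `i` there is a cycle at `s lam` of degree supported at `i`,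
  -- of positive degree exactly when `s lam` emits an edge of degree `eᵢ`.
  have key : ∀ i : Fin k, ∃ w : Λ.Path, Λ.r w = Λ.s lam ∧ Λ.s w = Λ.s lam ∧
      (∀ j, j ≠ i → Λ.d w j = 0) ∧
      (Λ.d w i = 0 ↔ ¬ ∃ e, Λ.r e = Λ.s lam ∧ Λ.d e = Pi.single i 1) := by
    intro i
    by_cases hI : ∃ e, Λ.r e = Λ.s lam ∧ Λ.d e = Pi.single i 1
    · obtain ⟨e0, he0r, he0d⟩ := hI
      -- `d lam i = N`
      have hdlamN : Λ.d lam i = N := by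
        have h1 : Λ.d lam i ≤ N := Pi.le_def.mp hlam.1 i
        by_contra hne'
        exact hlam.2 i (lt_of_le_of_ne h1 hne') e0 ⟨he0r, he0d⟩
      have hNpos : 0 < N := (Set.ncard_pos hfin).mpr ⟨Λ.s lam, hv0vert⟩
      have hsub_le : ∀ j : ℕ, Λ.d lam - j • Pi.single i 1 ≤ Λ.d lam := fun j => by
        refine Pi.le_def.mpr fun x => ?_
        simp only [Pi.sub_apply]
        omega
      -- pigeonhole among the vertices `lam (d lam - j eᵢ)`, `j = 0, …, N`
      have hmaps : ∀ j ∈ Finset.range (N + 1),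
          (fun j => Λ.seg lam (Λ.d lam - j • Pi.single i 1) (Λ.d lam - j • Pi.single i 1)) j
            ∈ hfin.toFinset := by
        intro j _
        rw [Set.Finite.mem_toFinset]
        show Λ.d _ = 0
        rw [Λ.d_seg lam le_rfl (hsub_le j)]
        simp
      have hcard : hfin.toFinset.card < (Finset.range (N + 1)).card := by
        rw [Finset.card_range, ← Set.ncard_eq_toFinset_card _ hfin, ← hN]
        omega
      obtain ⟨a0, ha0, b0, hb0, hab, hu⟩ :=
        Finset.exists_ne_map_eq_of_card_lt_of_maps_to hcard hmaps
      rw [Finset.mem_range] at ha0 hb0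
      obtain ⟨a, b, hab', hbN, huab⟩ : ∃ a b : ℕ, a < b ∧ b ≤ N ∧
          Λ.seg lam (Λ.d lam - a • Pi.single i 1) (Λ.d lam - a • Pi.single i 1) =
          Λ.seg lam (Λ.d lam - b • Pi.single i 1) (Λ.d lam - b • Pi.single i 1) := by
        rcases lt_or_gt_of_ne hab with h | h
        · exact ⟨a0, b0, h, by omega, hu⟩
        · exact ⟨b0, a0, h, by omega, hu.symm⟩
      have haN : a ≤ N := by omega
      -- the cycle `c` and the tail `t0`
      have hpb_pa : Λ.d lam - b • Pi.single i 1 ≤ Λ.d lam - a • Pi.single i 1 := by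
        refine Pi.le_def.mpr fun x => ?_
        simp only [Pi.sub_apply, KGraph.smul_single_apply]
        split_ifs <;> omega
      have hdc : Λ.d (Λ.seg lam (Λ.d lam - b • Pi.single i 1) (Λ.d lam - a • Pi.single i 1))
          = (b - a) • Pi.single i 1 := by
        rw [Λ.d_seg lam hpb_pa (hsub_le a)]
        funext x
        simp only [Pi.sub_apply, KGraph.smul_single_apply]
        split_ifs with hx
        · subst hx; omega
        · omega
      have hcyc_c : Λ.r (Λ.seg lam (Λ.d lam - b • Pi.single i 1) (Λ.d lam - a • Pi.single i 1))
          = Λ.s (Λ.seg lam (Λ.d lam - b • Pi.single i 1) (Λ.d lam - a • Pi.single i 1)) := by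
        rw [Λ.r_seg lam hpb_pa (hsub_le a), Λ.s_seg lam hpb_pa (hsub_le a)]
        exact huab.symm
      have hIsCycle : Λ.IsCycle (Λ.seg lam (Λ.d lam - b • Pi.single i 1)
          (Λ.d lam - a • Pi.single i 1)) := by
        refine ⟨?_, hcyc_c⟩
        rw [hdc]
        intro h0
        have h1 := congrFun h0 i
        rw [KGraph.smul_single_apply, if_pos rfl] at h1
        simp only [Pi.zero_apply] at h1
        omega
      have hne := hnoent _ hIsCycle
      -- the tail of `lam` from the cycle to `s lam`
      have hrt0 : Λ.r (Λ.seg lam (Λ.d lam - a • Pi.single i 1) (Λ.d lam)) =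
          Λ.r (Λ.seg lam (Λ.d lam - b • Pi.single i 1) (Λ.d lam - a • Pi.single i 1)) := by
        rw [Λ.r_seg lam (hsub_le a) le_rfl, Λ.r_seg lam hpb_pa (hsub_le a)]
        exact huab
      have hdt0 : Λ.d (Λ.seg lam (Λ.d lam - a • Pi.single i 1) (Λ.d lam))
          = a • Pi.single i 1 := by
        rw [Λ.d_seg lam (hsub_le a) le_rfl]
        funext x
        simp only [Pi.sub_apply, KGraph.smul_single_apply]
        split_ifs with hx
        · subst hx; omega
        · omega
      have hst0 : Λ.s (Λ.seg lam (Λ.d lam - a • Pi.single i 1) (Λ.d lam)) = Λ.s lam := by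
        rw [Λ.s_seg lam (hsub_le a) le_rfl, Λ.seg_top_top]
      obtain ⟨w, hw1, hw2, hw3⟩ := Λ.cycle_through _ i (b - a) (by omega) hdc hcyc_c hne
        _ a hrt0 hdt0
      rw [hst0] at hw1 hw2
      refine ⟨w, hw1, hw2, ?_, ?_⟩
      · intro j hj
        rw [hw3, KGraph.smul_single_apply, if_neg hj]
      · rw [hw3]
        rw [KGraph.smul_single_apply, if_pos rfl]
        constructor
        · intro h0; omega
        · intro hcon
          exact absurd ⟨e0, he0r, he0d⟩ hcon
    · exact ⟨Λ.s lam, hrv0, hsv0, fun j _ => hdv0 j, by simp [hI, hdv0 i]⟩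
  -- Step 2: compose the cycles over all directions
  have fold : ∀ l : List (Fin k), ∃ w, Λ.r w = Λ.s lam ∧ Λ.s w = Λ.s lam ∧
      ∀ j, (Λ.d w j = 0 ↔ (j ∈ l → ¬ ∃ e, Λ.r e = Λ.s lam ∧ Λ.d e = Pi.single j 1)) := by
    intro l
    induction l with
    | nil => exact ⟨Λ.s lam, hrv0, hsv0, fun j => by simp [hdv0 j]⟩
    | cons c l ih =>
      obtain ⟨w', hr', hs', hd'⟩ := ih
      obtain ⟨wc, hrc, hsc, hdc0, hdci⟩ := key c
      have hcompat : Λ.s wc = Λ.r w' := by rw [hsc, hr']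
      have hcomb := Λ.d_comp wc w' hcompat
      refine ⟨Λ.comp wc w', ?_, ?_, ?_⟩
      · rw [Λ.r_comp _ _ hcompat]; exact hrc
      · rw [Λ.s_comp _ _ hcompat]; exact hs'
      · intro j
        have hj := congrFun hcomb j
        simp only [Pi.add_apply] at hj
        rw [hj]
        by_cases hjc : j = c
        · subst hjc
          constructor
          · intro h0 _
            exact hdci.mp (by omega)
          · intro h
            have hE := h (List.mem_cons_self)
            have h1 : Λ.d wc j = 0 := hdci.mpr hE
            have h2 : Λ.d w' j = 0 := (hd' j).mpr fun _ => hE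
            omega
        · have h1 : Λ.d wc j = 0 := hdc0 j hjc
          constructor
          · intro h0 hmem
            rcases List.mem_cons.mp hmem with h3 | h3
            · exact absurd h3 hjc
            · exact (hd' j).mp (by omega) h3
          · intro h
            have h2 : Λ.d w' j = 0 := (hd' j).mpr fun h3 => h (List.mem_cons_of_mem _ h3)
            omega
  obtain ⟨mu, hrmu, hsmu, hdmu⟩ := fold (List.finRange k)
  have hdmu' : ∀ j, Λ.d mu j = 0 ↔ ¬ ∃ e, Λ.r e = Λ.s lam ∧ Λ.d e = Pi.single j 1 :=
    fun j => by
      rw [hdmu j]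
      exact ⟨fun h => h (List.mem_finRange j), fun h _ => h⟩
  have hrs : Λ.r mu = Λ.s mu := by rw [hrmu, hsmu]
  -- helper facts for `infIter`
  have hgood : ∀ q : Fin k → ℕ, (∀ i, (q i : ℕ∞) ≤ Λ.degInf mu i) →
      ∀ i, Λ.d mu i = 0 → q i = 0 := by
    intro q hq i hi
    have h1 := hq i
    have h2 : Λ.degInf mu i = 0 := by simp [KGraph.degInf, hi]
    rw [h2] at h1
    have h0 : (q i : ℕ∞) = 0 := le_antisymm h1 zero_le
    exact_mod_cast h0
  have hdT : ∀ T : ℕ, Λ.d (Λ.cpow mu T) = T • Λ.d mu := fun T => (Λ.cpow_spec mu hrs T).2.2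
  have hx00 : Λ.infIter mu 0 0 = Λ.r mu := by
    have hg0 : ∀ i, Λ.d mu i = 0 → (0 : Fin k → ℕ) i = 0 := fun i _ => rfl
    rw [Λ.infIter_eq mu hrs le_rfl hg0 (zero_le : (0 : Fin k → ℕ) ≤ (0 : ℕ) • Λ.d mu), Λ.seg_zero_zero]
    exact (Λ.cpow_spec mu hrs 0).2.1
  refine ⟨mu, ⟨hrs, ?_⟩, Λ.infIter mu, ⟨⟨?_, ?_, ?_⟩, hx00, ?_⟩, 0, ?_, ?_⟩
  · -- initial cycle condition
    rintro i hdi e ⟨h1, h2⟩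
    exact (hdmu' i).mp hdi ⟨e, h1.trans hrmu, h2⟩
  · -- degrees of infIter
    intro p q hpq hqb
    have hg := hgood q hqb
    have hT := Λ.le_sum_smul mu hg
    rw [Λ.infIter_eq mu hrs hpq hg hT, Λ.d_seg _ hpq (by rw [hdT]; exact hT)]
  · -- range and source of infIter
    intro p q hpq hqb
    have hg := hgood q hqb
    have hT := Λ.le_sum_smul mu hg
    have hpg : ∀ i, Λ.d mu i = 0 → p i = 0 := fun i hi =>
      Nat.le_zero.mp ((hg i hi) ▸ (Pi.le_def.mp hpq i))
    constructor
    · rw [Λ.infIter_eq mu hrs hpq hg hT,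
        Λ.infIter_eq mu hrs le_rfl hpg (le_trans hpq hT),
        Λ.r_seg _ hpq (by rw [hdT]; exact hT)]
    · rw [Λ.infIter_eq mu hrs hpq hg hT, Λ.infIter_eq mu hrs le_rfl hg hT,
        Λ.s_seg _ hpq (by rw [hdT]; exact hT)]
  · -- composition law for infIter
    intro p q u hpq hqu hub
    have hgu := hgood u hub
    have hTu := Λ.le_sum_smul mu hgu
    have hgq : ∀ i, Λ.d mu i = 0 → q i = 0 := fun i hi =>
      Nat.le_zero.mp ((hgu i hi) ▸ (Pi.le_def.mp hqu i))
    rw [Λ.infIter_eq mu hrs hpq hgq (le_trans hqu hTu),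
      Λ.infIter_eq mu hrs hqu hgu hTu,
      Λ.infIter_eq mu hrs (le_trans hpq hqu) hgu hTu,
      Λ.comp_seg _ hpq hqu (by rw [hdT]; exact hTu)]
  · -- the iterate property
    intro n
    have hpq : n • Λ.d mu ≤ (n + 1) • Λ.d mu := by
      refine Pi.le_def.mpr fun x => ?_
      simp only [Pi.smul_apply, smul_eq_mul]
      exact Nat.mul_le_mul_right _ (Nat.le_succ n)
    have hg : ∀ i, Λ.d mu i = 0 → ((n + 1) • Λ.d mu) i = 0 := fun i hi => by
      simp [hi]
    rw [Λ.infIter_eq mu hrs hpq hg (le_refl ((n + 1) • Λ.d mu))]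
    have hd1 := hdT (n + 1)
    have hdn := hdT n
    have hs1 := (Λ.cpow_spec mu hrs n).1
    have hsplit : Λ.split (Λ.cpow mu (n + 1)) (n • Λ.d mu) = (Λ.cpow mu n, mu) := by
      rw [← hdn]
      exact Λ.comp_split _ _ hs1
    have hq' : n • Λ.d mu ≤ Λ.d (Λ.cpow mu (n + 1)) := by rw [hd1]; exact hpq
    rw [show ((n + 1) • Λ.d mu : Fin k → ℕ) = Λ.d (Λ.cpow mu (n + 1)) from hd1.symm,
      Λ.seg_top _ hq', hsplit]
  · -- `n = 0` is below the degree of `μ^∞`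
    intro i
    simp only [Pi.zero_apply, Nat.cast_zero]
    exact zero_le
  · rw [hx00]; exact hrmu
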